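/- Let L/K be a totally ramified cyclic extension of degree p with ramification break s, G = Gal(L/K). If x ∈ O_L satisfies tr_{L/K}(x) = 0 and x represents a nonzero class in H^1(G, O_L) ≅ O_L^{tr=0}/(σ−1)O_L, then v_L(x) ≤ s−1. Equivalently, any trace-zero element x with v_L(x) ≥ s lies in (σ−1)O_L. -/

import Mathlib

noncomputable section

/-- The value group `ℤₘ₀ = ℤ ∪ {0}` (multiplicative notation) of a normalized discrete
valuation. -/
abbrev Zm0 : Type := WithZero (Multiplicative ℤ)

/-- The element of `ℤₘ₀` corresponding to additive valuation value `-n`; an element `x` has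
(additive, normalized) valuation `n` iff the multiplicative valuation satisfies
`w x = oa (-n)`. -/
def oa (n : ℤ) : Zm0 := (Multiplicative.ofAdd n : Multiplicative ℤ)

lemma oa_le_oa {m n : ℤ} : oa m ≤ oa n ↔ m ≤ n := by
  simp [oa, WithZero.coe_le_coe, Multiplicative.ofAdd_le]

lemma oa_lt_oa {m n : ℤ} : oa m < oa n ↔ m < n := by
  simp [oa, WithZero.coe_lt_coe, Multiplicative.ofAdd_lt]

lemma oa_inj {m n : ℤ} (h : oa m = oa n) : m = n :=
  le_antisymm (oa_le_oa.mp h.le) (oa_le_oa.mp h.ge)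

lemma oa_ne_zero (n : ℤ) : oa n ≠ 0 := WithZero.coe_ne_zero

lemma oa_zero : oa 0 = 1 := rfl

lemma oa_mul (m n : ℤ) : oa (m + n) = oa m * oa n := by
  simp [oa, ← WithZero.coe_mul, ← ofAdd_add]

lemma oa_pow (k : ℕ) (m : ℤ) : oa m ^ k = oa (k * m) := by
  induction k with
  | zero => simp [oa_zero]
  | succ k ih =>
      rw [pow_succ, ih, ← oa_mul]
      congr 1
      push_cast
      ring

lemma exists_oa {x : Zm0} (h : x ≠ 0) : ∃ n : ℤ, x = oa n := by
  obtain ⟨a, rfl⟩ := WithZero.ne_zero_iff_exists.mp h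
  exact ⟨Multiplicative.toAdd a, rfl⟩

lemma le_oa_of_lt {x : Zm0} {m : ℤ} (h : x < oa m) : x ≤ oa (m - 1) := by
  rcases eq_or_ne x 0 with rfl | hx
  · exact zero_le'
  · obtain ⟨n, rfl⟩ := exists_oa hx
    exact oa_le_oa.mpr (by have := oa_lt_oa.mp h; omega)

/-- Hesselholt, Lemma 2.4, contrapositive form. Let `L/K` be a totally
ramified cyclic extension of degree `p` with ramification break `s` and Galois group
generated by `σ`. If `x ∈ O_L` has `tr_{L/K}(x) = 0` and `v_L(x) ≥ s`, then `x` represents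
the zero class in `H¹(G, O_L) ≅ O_L^{tr=0}/(σ−1)O_L`; that is, `x = σ(y) − y` for some
`y ∈ O_L`. Equivalently, a trace-zero `x` representing a nonzero class has `v_L(x) ≤ s−1`. -/
theorem stmt15 (p : ℕ) (hp : p.Prime) (K L : Type) [Field K] [Field L] [Algebra K L]
    [CharZero K] [IsGalois K L] [FiniteDimensional K L]
    (hdeg : Module.finrank K L = p)
    (wK : Valuation K Zm0) (wL : Valuation L Zm0)
    (hwK : Function.Surjective wK) (hwL : Function.Surjective wL)
    (hKcomplete : @CompleteSpace K (Valued.mk' wK).toUniformSpace)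
    (hLcomplete : @CompleteSpace L (Valued.mk' wL).toUniformSpace)
    (hext : ∀ x : K, wL (algebraMap K L x) = wK x ^ p)
    (hres : wK (p : K) < 1)
    (σ : L ≃ₐ[K] L) (hσ : ∀ τ : L ≃ₐ[K] L, τ ∈ Subgroup.zpowers σ)
    (s : ℤ) (hspos : 0 < s)
    (hs : ∀ τ : L ≃ₐ[K] L, τ ≠ AlgEquiv.refl →
      (∀ a : L, wL a ≤ 1 → wL (τ a - a) ≤ oa (-(s + 1))) ∧
      (∃ a : L, wL a ≤ 1 ∧ wL (τ a - a) = oa (-(s + 1)))) :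
    ∀ x : L, wL x ≤ 1 → Algebra.trace K L x = 0 → wL x ≤ oa (-s) →
      ∃ y : L, wL y ≤ 1 ∧ x = σ y - y := by
  intro x hx1 hxtr hxs
  set A := algebraMap K L with hA
  -- ## basic group theory
  have hp2 : 2 ≤ p := hp.two_le
  have hppos : (0:ℤ) < (p:ℤ) := by exact_mod_cast hp.pos
  have hcard : Fintype.card (L ≃ₐ[K] L) = p := by
    rw [← Nat.card_eq_fintype_card, IsGalois.card_aut_eq_finrank, hdeg]
  have horder : orderOf σ = p := by
    rw [orderOf_eq_card_of_forall_mem_zpowers hσ, Nat.card_eq_fintype_card, hcard]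
  have hσ1 : σ ≠ AlgEquiv.refl := by
    intro h
    have h1 : σ = (1 : L ≃ₐ[K] L) := h
    rw [h1, orderOf_one] at horder
    omega
  obtain ⟨hsb, a₀, ha₀i, ha₀⟩ := hs σ hσ1
  -- ## basic valuation facts
  have hwL0 : ∀ t : L, t ≠ 0 → wL t ≠ 0 := fun t ht => by
    simpa [Valuation.ne_zero_iff] using ht
  obtain ⟨π, hπ⟩ := hwL (oa (-1))
  have hπ0 : π ≠ 0 := by
    intro h; rw [h, map_zero] at hπ; exact oa_ne_zero _ hπ.symm
  have hπle : wL π ≤ 1 := by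
    rw [hπ, ← oa_zero]; exact oa_le_oa.mpr (by omega)
  have hpowval : ∀ k : ℕ, wL (π ^ k) = oa (-(k:ℤ)) := by
    intro k
    rw [map_pow, hπ, oa_pow]
    exact congrArg oa (by push_cast; ring)
  -- integers
  have hwKnat : ∀ n : ℕ, wK (n : K) ≤ 1 := by
    intro n
    induction n with
    | zero => simp
    | succ n ih =>
        push_cast
        exact le_trans (wK.map_add _ _) (max_le ih (le_of_eq wK.map_one))
  have hwKint : ∀ a : ℤ, wK (a : K) ≤ 1 := by
    intro a
    obtain ⟨n, rfl | rfl⟩ := a.eq_nat_or_neg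
    · exact_mod_cast hwKnat n
    · push_cast
      rw [Valuation.map_neg]
      exact_mod_cast hwKnat n
  have hcop : ∀ q : ℤ, ¬ (p:ℤ) ∣ q → wK (q : K) = 1 := by
    intro q hq
    have hcp : IsCoprime (q : ℤ) (p : ℤ) := by
      rw [Int.isCoprime_iff_gcd_eq_one]
      have h1 : ¬ ((p:ℤ).natAbs ∣ q.natAbs) := fun h => hq (Int.natAbs_dvd_natAbs.mp h)
      rw [Int.natAbs_natCast] at h1
      have h2 : Nat.Coprime p q.natAbs := (Nat.Prime.coprime_iff_not_dvd hp).mpr h1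
      have h3 : Nat.gcd q.natAbs p = 1 := Nat.coprime_comm.mp h2
      simp [Int.gcd, h3]
    obtain ⟨a, b, hab⟩ := hcp
    have h1 : (1:K) = (a:K) * (q:K) + (b:K) * (p:K) := by
      have h0 := congrArg (fun z : ℤ => (z : K)) hab
      push_cast at h0
      exact h0.symm
    have h2 : (1:Zm0) ≤ max (wK ((a:K)*(q:K))) (wK ((b:K)*(p:K))) := by
      calc (1:Zm0) = wK 1 := (wK.map_one).symm
        _ = wK ((a:K)*(q:K) + (b:K)*(p:K)) := by rw [← h1]
        _ ≤ max (wK ((a:K)*(q:K))) (wK ((b:K)*(p:K))) := wK.map_add _ _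
    have h3 : wK ((b:K)*(p:K)) < 1 := by
      rw [map_mul]
      calc wK (b:K) * wK (p:K) ≤ 1 * wK (p:K) := mul_le_mul_left (hwKint b) _
        _ = wK (p:K) := one_mul _
        _ < 1 := hres
    have h4 : (1:Zm0) ≤ wK ((a:K)*(q:K)) := by
      rcases max_cases (wK ((a:K)*(q:K))) (wK ((b:K)*(p:K))) with ⟨he, _⟩ | ⟨he, _⟩ <;>
        rw [he] at h2
      · exact h2
      · exact absurd (lt_of_le_of_lt h2 h3) (lt_irrefl _)
    have h5 : (1:Zm0) ≤ wK (q:K) := by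
      rw [map_mul] at h4
      calc (1:Zm0) ≤ wK (a:K) * wK (q:K) := h4
        _ ≤ 1 * wK (q:K) := mul_le_mul_left (hwKint a) _
        _ = wK (q:K) := one_mul _
    exact le_antisymm (hwKint q) h5
  have hwLnat : ∀ q : ℕ, wL (q : L) ≤ 1 := by
    intro q
    have h1 : ((q:ℕ) : L) = A ((q:ℕ) : K) := by push_cast; simp
    rw [h1, hext]
    exact pow_le_one' (hwKnat q) p
  have hwLnat1 : ∀ q : ℕ, ¬ (p:ℤ) ∣ (q:ℤ) → wL (q : L) = 1 := by
    intro q hq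
    have h1 : ((q:ℕ) : L) = A ((q:ℕ) : K) := by push_cast; simp
    have h2 : ((q:ℕ) : K) = ((q:ℤ) : K) := by push_cast; ring
    rw [h1, hext, h2, hcop _ hq, one_pow]
  -- ## trace as a sum of powers of σ
  have htr : ∀ z : L, A (Algebra.trace K L z) = ∑ i ∈ Finset.range p, (σ ^ i) z := by
    intro z
    rw [hA, trace_eq_sum_automorphisms]
    symm
    apply Finset.sum_bij (i := fun (a : ℕ) (_ : a ∈ Finset.range p) => σ ^ a)
    · intro a _; exact Finset.mem_univ _
    · intro a₁ ha₁ a₂ ha₂ h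
      refine pow_injOn_Iio_orderOf ?_ ?_ h
      · rw [horder]; exact Set.mem_Iio.mpr (Finset.mem_range.mp ha₁)
      · rw [horder]; exact Set.mem_Iio.mpr (Finset.mem_range.mp ha₂)
    · intro τ _
      obtain ⟨k, hk⟩ := Subgroup.mem_zpowers_iff.mp (hσ τ)
      have h2 : 0 ≤ k % (p:ℤ) := Int.emod_nonneg _ (ne_of_gt hppos)
      have h3 : k % (p:ℤ) < p := Int.emod_lt_of_pos _ hppos
      refine ⟨(k % (p:ℤ)).toNat, Finset.mem_range.mpr (by omega), ?_⟩
      rw [← hk, ← zpow_natCast, Int.toNat_of_nonneg h2, ← horder, zpow_mod_orderOf]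
    · intro a _; rfl
  -- ## additive Hilbert 90
  have h90 : ∀ z : L, Algebra.trace K L z = 0 → ∃ y : L, z = σ y - y := by
    intro z hz
    obtain ⟨θ, hθ1⟩ : ∃ θ : L, Algebra.trace K L θ = 1 := by
      have hpK : (p:K) ≠ 0 := Nat.cast_ne_zero.mpr hp.ne_zero
      refine ⟨A ((p:K)⁻¹), ?_⟩
      rw [hA, Algebra.trace_algebraMap, hdeg, nsmul_eq_mul, mul_inv_cancel₀ hpK]
    have hσp : σ ^ p = 1 := by rw [← horder]; exact pow_orderOf_eq_one σ
    set S : ℕ → L := fun i => ∑ j ∈ Finset.range i, (σ ^ j) z with hSdef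
    set Y : L := ∑ i ∈ Finset.range p, S i * (σ ^ i) θ with hYdef
    have hstep : ∀ (w : L) (i : ℕ), σ ((σ ^ i) w) = (σ ^ (i+1)) w := by
      intro w i
      rw [pow_succ']
      rfl
    have hσS : ∀ i, σ (S i) = S (i + 1) - z := by
      intro i
      have h1 : σ (S i) = ∑ j ∈ Finset.range i, (σ ^ (j+1)) z := by
        show σ (∑ j ∈ Finset.range i, (σ ^ j) z) = _
        rw [map_sum]
        exact Finset.sum_congr rfl fun j _ => hstep z j
      have h2 : S (i+1) = (∑ j ∈ Finset.range i, (σ ^ (j+1)) z) + z := by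
        show ∑ j ∈ Finset.range (i+1), (σ ^ j) z = _
        rw [Finset.sum_range_succ' (fun j => (σ ^ j) z) i]
        simp
      rw [h1, h2]; ring
    have hSp : S p = 0 := by
      show ∑ j ∈ Finset.range p, (σ ^ j) z = 0
      rw [← htr z, hz, map_zero]
    have hS0 : S 0 = 0 := by simp [hSdef]
    have hTθ : ∑ i ∈ Finset.range p, (σ ^ i) θ = 1 := by
      rw [← htr θ, hθ1, map_one]
    have hσY : σ Y = Y - z := by
      have h1 : σ Y = ∑ i ∈ Finset.range p, (S (i+1) - z) * (σ ^ (i+1)) θ := by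
        rw [hYdef, map_sum]
        refine Finset.sum_congr rfl fun i _ => ?_
        rw [map_mul, hσS, hstep]
      have h2 : ∑ i ∈ Finset.range p, S (i+1) * (σ ^ (i+1)) θ = Y := by
        have h3 := Finset.sum_range_succ' (fun i => S i * (σ ^ i) θ) p
        rw [Finset.sum_range_succ (fun i => S i * (σ ^ i) θ) p] at h3
        have h4 : S p * (σ ^ p) θ = 0 := by rw [hSp, zero_mul]
        have h5 : S 0 * (σ ^ 0) θ = 0 := by rw [hS0, zero_mul]
        rw [h4, h5, add_zero, add_zero] at h3
        rw [← h3, hYdef]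
      have h6 : ∑ i ∈ Finset.range p, (σ ^ (i+1)) θ = 1 := by
        have h3 := Finset.sum_range_succ' (fun i => (σ ^ i) θ) p
        rw [Finset.sum_range_succ (fun i => (σ ^ i) θ) p] at h3
        have h4 : (σ ^ p) θ = θ := by rw [hσp]; rfl
        have h5 : (σ ^ (0:ℕ)) θ = θ := by rw [pow_zero]; rfl
        rw [h4, h5] at h3
        have h7 := add_right_cancel h3
        rw [← h7, hTθ]
      calc σ Y = ∑ i ∈ Finset.range p, (S (i+1) * (σ ^ (i+1)) θ - z * (σ ^ (i+1)) θ) := by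
            rw [h1]; exact Finset.sum_congr rfl fun i _ => by ring
        _ = (∑ i ∈ Finset.range p, S (i+1) * (σ ^ (i+1)) θ)
              - ∑ i ∈ Finset.range p, z * (σ ^ (i+1)) θ := Finset.sum_sub_distrib _ _
        _ = Y - z * ∑ i ∈ Finset.range p, (σ ^ (i+1)) θ := by rw [h2, Finset.mul_sum]
        _ = Y - z := by rw [h6, mul_one]
    exact ⟨-Y, by rw [map_neg, hσY]; ring⟩
  -- ## the basic binomial estimates
  set ε := σ π - π with hε
  have hεle : wL ε ≤ oa (-(s+1)) := hsb π hπle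
  have hbin : ∀ k : ℕ, (σ π)^k - π^k
      = ∑ j ∈ Finset.range k, ε^(j+1) * π^(k-(j+1)) * ((k.choose (j+1) : ℕ) : L) := by
    intro k
    have h1 : σ π = ε + π := by rw [hε]; ring
    rw [h1, add_pow,
      Finset.sum_range_succ' (fun j => ε^j * π^(k-j) * ((k.choose j : ℕ):L)) k]
    simp only [pow_zero, one_mul, Nat.choose_zero_right, Nat.cast_one, mul_one, Nat.sub_zero]
    exact add_sub_cancel_right _ _
  have hbinle : ∀ (k : ℕ) (r : ℤ), wL ε ≤ oa r → r ≤ -1 →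
      wL ((σ π)^k - π^k) ≤ oa (r + 1 - k) := by
    intro k r hre hr1
    rw [hbin k]
    apply wL.map_sum_le
    intro j hj
    have hjk : j + 1 ≤ k := Finset.mem_range.mp hj
    rw [map_mul, map_mul, map_pow, hpowval]
    have e1 : wL ε ^ (j+1) ≤ oa (r - j) := by
      calc wL ε ^ (j+1) ≤ (oa r) ^ (j+1) := pow_le_pow_left' hre _
        _ = oa (((j:ℤ)+1) * r) := by rw [oa_pow]; exact congrArg oa (by push_cast; ring)
        _ ≤ oa (r - j) := oa_le_oa.mpr (by
            nlinarith [mul_le_mul_of_nonneg_left hr1 (Int.natCast_nonneg j)])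
    have e2 : wL (((k.choose (j+1) : ℕ) : L)) ≤ 1 := hwLnat _
    calc wL ε ^ (j+1) * oa (-((k - (j+1) : ℕ):ℤ)) * wL (((k.choose (j+1):ℕ)):L)
        ≤ oa (r - j) * oa (-((k - (j+1) : ℕ):ℤ)) * 1 := mul_le_mul' (mul_le_mul' e1 le_rfl) e2
      _ = oa (r + 1 - k) := by
          rw [mul_one, ← oa_mul]
          have hcast : ((k - (j+1) : ℕ):ℤ) = (k:ℤ) - (j:ℤ) - 1 := by
            rw [Nat.cast_sub hjk]; push_cast; ring
          exact congrArg oa (by rw [hcast]; ring)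
  have hbinexact : wL ε = oa (-(s+1)) → ∀ k : ℕ, 1 ≤ k → ¬ (p:ℤ) ∣ (k:ℤ) →
      wL ((σ π)^k - π^k) = oa (-s - k) := by
    intro hπex k hk1 hkp
    rw [hbin k]
    have h0mem : (0:ℕ) ∈ Finset.range k := Finset.mem_range.mpr (by omega)
    have hcast1 : ((k - 1 : ℕ):ℤ) = (k:ℤ) - 1 := by
      rw [Nat.cast_sub hk1]; push_cast; ring
    have hval0 : wL (ε^(0+1) * π^(k-(0+1)) * ((k.choose (0+1) : ℕ) : L)) = oa (-s - k) := by
      rw [map_mul, map_mul, map_pow, hpowval, hπex]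
      rw [Nat.choose_one_right, hwLnat1 k hkp, mul_one, pow_one, ← oa_mul]
      exact congrArg oa (by rw [hcast1]; ring)
    have hlt : ∀ j, j ∈ Finset.range k → j ≠ 0 →
        wL (ε^(j+1) * π^(k-(j+1)) * ((k.choose (j+1) : ℕ) : L))
          < wL (ε^(0+1) * π^(k-(0+1)) * ((k.choose (0+1) : ℕ) : L)) := by
      intro j hjr hjne
      have hj1 : 1 ≤ j := Nat.one_le_iff_ne_zero.mpr hjne
      have hjk : j + 1 ≤ k := Finset.mem_range.mp hjr
      have hcast : ((k-(j+1):ℕ):ℤ) = (k:ℤ) - j - 1 := by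
        rw [Nat.cast_sub hjk]; push_cast; ring
      rw [hval0, map_mul, map_mul, map_pow, hpowval]
      have e1 : wL ε ^ (j+1) = oa (((j:ℤ)+1) * (-(s+1))) := by
        rw [hπex, oa_pow]; exact congrArg oa (by push_cast; ring)
      calc wL ε ^ (j+1) * oa (-((k-(j+1):ℕ):ℤ)) * wL (((k.choose (j+1) : ℕ)) : L)
          ≤ oa (((j:ℤ)+1) * (-(s+1))) * oa (-((k-(j+1):ℕ):ℤ)) * 1 :=
            mul_le_mul' (mul_le_mul' (le_of_eq e1) le_rfl) (hwLnat _)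
        _ = oa (((j:ℤ)+1) * (-(s+1)) - ((k:ℤ) - j - 1)) := by
            rw [mul_one, ← oa_mul]
            exact congrArg oa (by rw [hcast]; ring)
        _ < oa (-s - k) := oa_lt_oa.mpr (by
            nlinarith [mul_pos hspos (show (0:ℤ) < (j:ℤ) by exact_mod_cast hj1)])
    rw [wL.map_sum_eq_of_lt h0mem
      (fun i hi => by
        have hi' := (@Finset.mem_sdiff ℕ _ _ _ _).mp hi
        exact hlt i hi'.1 (by simpa using hi'.2)), hval0]
  -- ## multiplicative decomposition of arbitrary elements
  have hdecomp : ∀ (t : L), t ≠ 0 → ∀ n : ℤ, wL t = oa n → ∃ (c : K) (u : L) (k : ℕ),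
      t = A c * u * π ^ k ∧ wL u = 1 ∧ wL (A c) = oa (n + k) ∧ ((k:ℤ) = (-n) % (p:ℤ)) := by
    intro t ht n hn
    have hpne : ((p:ℤ)) ≠ 0 := ne_of_gt hppos
    set k : ℕ := ((-n) % (p:ℤ)).toNat with hkdef
    have hknn : (0:ℤ) ≤ (-n) % (p:ℤ) := Int.emod_nonneg _ hpne
    have hk : (k:ℤ) = (-n) % (p:ℤ) := Int.toNat_of_nonneg hknn
    have hdvd : (p:ℤ) ∣ (n + k) := by
      rw [hk, Int.emod_def]
      exact ⟨-((-n) / p), by ring⟩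
    obtain ⟨c, hc⟩ := hwK (oa ((n + k) / p))
    have hc0 : c ≠ 0 := by
      intro h; rw [h, map_zero] at hc; exact oa_ne_zero _ hc.symm
    have hcv : wL (A c) = oa (n + k) := by
      rw [hext, hc, oa_pow, Int.mul_ediv_cancel' hdvd]
    have hAcne : A c ≠ 0 := fun h => hc0 ((map_eq_zero_iff A (RingHom.injective A)).mp h)
    have hπkne : π ^ k ≠ 0 := pow_ne_zero _ hπ0
    have hck : A c * π ^ k ≠ 0 := mul_ne_zero hAcne hπkne
    refine ⟨c, t / (A c * π ^ k), k, ?_, ?_, hcv, hk⟩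
    · field_simp
    · have h5 : t / (A c * π ^ k) * (A c * π ^ k) = t := div_mul_cancel₀ _ hck
      have h6 := congrArg wL h5
      rw [map_mul, map_mul, hcv, hpowval, hn] at h6
      have h7 : oa (n + k) * oa (-(k:ℤ)) = oa n := by rw [← oa_mul]; exact congrArg oa (by ring)
      rw [h7] at h6
      exact mul_right_cancel₀ (oa_ne_zero n) (by rw [h6, one_mul])
  have hconj : ∀ (c : K) (u : L) (k : ℕ),
      σ (A c * u * π^k) - A c * u * π^k
        = A c * (σ u * ((σ π)^k - π^k) + (σ u - u) * π^k) := by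
    intro c u k
    have hc : σ (A c) = A c := σ.commutes c
    simp only [map_mul, map_pow, hc]
    ring
  have hσunit : ∀ u : L, wL u = 1 → wL (σ u) = 1 ∧ wL (σ u - u) ≤ oa (-(s+1)) := by
    intro u hu
    have h2 := hsb u (le_of_eq hu)
    have h3 : wL (σ u - u) < wL u := by
      rw [hu]
      exact lt_of_le_of_lt h2 (by rw [← oa_zero]; exact oa_lt_oa.mpr (by omega))
    refine ⟨?_, h2⟩
    have h4 : σ u = u + (σ u - u) := by ring
    rw [h4, Valuation.map_add_eq_of_lt_left _ h3, hu]
  -- ## residue field is that of K: approximation of units by constants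
  have hfval : ∀ (g : Fin p → K) (j : Fin p), g j ≠ 0 →
      ∃ m : ℤ, wL (g j • π ^ (j:ℕ)) = oa ((p:ℤ) * m - (j:ℕ)) := by
    intro g j hgj
    have hne : wK (g j) ≠ 0 := fun h => hgj ((Valuation.zero_iff wK).mp h)
    obtain ⟨m, hm⟩ := exists_oa hne
    refine ⟨m, ?_⟩
    rw [Algebra.smul_def, map_mul, ← hA, hext, hm, oa_pow, hpowval, ← oa_mul]
    exact congrArg oa (by ring)
  have hmaxval : ∀ (g : Fin p → K) (j₁ : Fin p), g j₁ ≠ 0 →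
      ∃ j₀, g j₀ ≠ 0 ∧ wL (∑ j, g j • π ^ (j:ℕ)) = wL (g j₀ • π ^ (j₀:ℕ)) ∧
        ∀ j, wL (g j • π ^ (j:ℕ)) ≤ wL (g j₀ • π ^ (j₀:ℕ)) := by
    haveI := Classical.decEq K
    intro g j₁ hj₁
    set S : Finset (Fin p) := Finset.univ.filter (fun j => g j ≠ 0) with hSdf
    have hSne : S.Nonempty := ⟨j₁, by simp [hSdf, hj₁]⟩
    obtain ⟨j₀, hj₀S, hmax⟩ := Finset.exists_max_image S (fun j => wL (g j • π ^ (j:ℕ))) hSne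
    have hj₀ : g j₀ ≠ 0 := by
      have := (Finset.mem_filter.mp hj₀S).2
      simpa using this
    have h0 : wL (g j₀ • π ^ ((j₀:Fin p):ℕ)) ≠ 0 :=
      hwL0 _ (smul_ne_zero hj₀ (pow_ne_zero _ hπ0))
    have hball : ∀ j, wL (g j • π ^ (j:ℕ)) ≤ wL (g j₀ • π ^ ((j₀:Fin p):ℕ)) := by
      intro j
      by_cases hgj : g j = 0
      · rw [hgj, zero_smul, map_zero]; exact zero_le'
      · exact hmax j (by simp [hSdf, hgj])
    have hlt : ∀ i, i ≠ j₀ →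
        wL (g i • π ^ (i:ℕ)) < wL (g j₀ • π ^ ((j₀:Fin p):ℕ)) := by
      intro i hij
      by_cases hgi : g i = 0
      · rw [hgi, zero_smul, map_zero]; exact zero_lt_iff.mpr h0
      · refine lt_of_le_of_ne (hball i) (fun heq => hij ?_)
        obtain ⟨mi, hmi⟩ := hfval g i hgi
        obtain ⟨m0, hm0⟩ := hfval g j₀ hj₀
        rw [hmi, hm0] at heq
        have heq2 := oa_inj heq
        have hd : ((i:ℕ):ℤ) - ((j₀:ℕ):ℤ) = (p:ℤ) * (mi - m0) := by linear_combination -heq2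
        have h1 : ((i:ℕ):ℤ) < p := by exact_mod_cast i.isLt
        have h2 : ((j₀:ℕ):ℤ) < p := by exact_mod_cast j₀.isLt
        have h3 : (p:ℤ) ∣ (((i:ℕ):ℤ) - ((j₀:ℕ):ℤ)) := ⟨mi - m0, hd⟩
        have h4 : ((i:ℕ):ℤ) - ((j₀:ℕ):ℤ) = 0 := by
          refine Int.eq_zero_of_abs_lt_dvd h3 ?_
          have h5 : (0:ℤ) ≤ ((i:ℕ):ℤ) := Int.natCast_nonneg _
          have h6 : (0:ℤ) ≤ ((j₀:ℕ):ℤ) := Int.natCast_nonneg _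
          rw [abs_lt]; omega
        have h7 : (i:ℕ) = ((j₀:Fin p):ℕ) := by omega
        exact Fin.ext h7
    exact ⟨j₀, hj₀, wL.map_sum_eq_of_lt (Finset.mem_univ j₀)
      (fun i hi => by
        have hi' := (@Finset.mem_sdiff (Fin p) _ _ _ _).mp hi
        exact hlt i (by simpa using hi'.2)), hball⟩
  have hnz : Nonempty (Fin p) := ⟨⟨0, hp.pos⟩⟩
  have hli : LinearIndependent K (fun j : Fin p => π ^ (j:ℕ)) := by
    rw [Fintype.linearIndependent_iff]
    intro g hg
    by_contra hcon
    push_neg at hcon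
    obtain ⟨j₁, hj₁⟩ := hcon
    obtain ⟨j₀, hj₀, hsum, _⟩ := hmaxval g j₁ hj₁
    rw [hg, map_zero] at hsum
    exact hwL0 _ (smul_ne_zero hj₀ (pow_ne_zero _ hπ0)) hsum.symm
  have hcardeq : Fintype.card (Fin p) = Module.finrank K L := by simp [hdeg]
  set b := basisOfLinearIndependentOfCardEqFinrank hli hcardeq with hb
  have hbeq : ∀ j : Fin p, b j = π ^ (j:ℕ) := by
    intro j; rw [hb, coe_basisOfLinearIndependentOfCardEqFinrank]
  have happrox : ∀ u : L, wL u = 1 → ∃ c : K, wL (u - A c) ≤ oa (-1) := by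
    intro u hu
    set g : Fin p → K := fun j => b.repr u j with hgdef
    have hrep : ∑ j, g j • π ^ (j:ℕ) = u := by
      conv_rhs => rw [← b.sum_repr u]
      exact Finset.sum_congr rfl fun j _ => by rw [hbeq]
    have hu0 : u ≠ 0 := fun h => by rw [h, map_zero] at hu; exact zero_ne_one hu
    have hgne : ∃ j, g j ≠ 0 := by
      by_contra hc; push_neg at hc
      apply hu0
      rw [← hrep]
      exact Finset.sum_eq_zero fun j _ => by rw [hc, zero_smul]
    obtain ⟨j₁, hj₁⟩ := hgne
    obtain ⟨j₀, hj₀, hsum, hball⟩ := hmaxval g j₁ hj₁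
    have hterm_le : ∀ j, wL (g j • π ^ (j:ℕ)) ≤ 1 := by
      intro j
      refine le_trans (hball j) ?_
      rw [← hsum, hrep, hu]
    set z0 : Fin p := ⟨0, hp.pos⟩ with hz0
    have htail : ∀ j : Fin p, j ≠ z0 → wL (g j • π ^ (j:ℕ)) ≤ oa (-1) := by
      intro j hj
      by_cases hgj : g j = 0
      · rw [hgj, zero_smul, map_zero]; exact zero_le'
      obtain ⟨m, hm⟩ := hfval g j hgj
      have h1 : wL (g j • π ^ (j:ℕ)) ≤ 1 := hterm_le j
      rw [hm] at h1 ⊢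
      rw [← oa_zero] at h1
      have h2 : (p:ℤ) * m - (j:ℕ) ≤ 0 := oa_le_oa.mp h1
      have hjne : ((j:ℕ)) ≠ 0 := by
        intro h
        apply hj
        apply Fin.ext
        rw [h]
      apply oa_le_oa.mpr
      by_contra hc; push_neg at hc
      have h3 : (p:ℤ) * m = (j:ℕ) := by omega
      have h4 : (p:ℕ) ∣ (j:ℕ) := by
        have h5 : ((p:ℤ)) ∣ ((j:ℕ):ℤ) := ⟨m, h3.symm⟩
        exact_mod_cast h5
      have h6 := Nat.le_of_dvd (Nat.pos_of_ne_zero hjne) h4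
      have h7 := j.isLt
      omega
    refine ⟨g z0, ?_⟩
    have h2z : g z0 • π ^ ((z0:Fin p):ℕ) = A (g z0) := by
      have : ((z0:Fin p):ℕ) = 0 := rfl
      rw [this, pow_zero, Algebra.smul_def, mul_one, ← hA]
    have hsplit : u - A (g z0) = ∑ j ∈ Finset.univ.erase z0, g j • π ^ (j:ℕ) := by
      have h1 : g z0 • π ^ ((z0:Fin p):ℕ) + ∑ j ∈ Finset.univ.erase z0, g j • π ^ (j:ℕ)
          = ∑ j : Fin p, g j • π ^ (j:ℕ) :=
        Finset.add_sum_erase Finset.univ (fun j : Fin p => g j • π ^ (j:ℕ))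
          (Finset.mem_univ z0)
      rw [← hrep, ← h1, h2z]
      ring
    rw [hsplit]
    exact wL.map_sum_le fun j hj => htail j (Finset.ne_of_mem_erase hj)
  -- ## the ramification break is exactly s : equality for a uniformizer
  have hπs : wL ε = oa (-(s+1)) := by
    by_contra hnee
    have hlt : wL ε < oa (-(s+1)) := lt_of_le_of_ne hεle hnee
    have hsup : wL ε ≤ oa (-(s+2)) := by
      have h1 := le_oa_of_lt hlt
      have h2 : -(s+1) - 1 = -(s+2) := by ring
      rwa [h2] at h1
    have hneg : ∀ (a : L), a ≠ 0 → ∀ n : ℤ, n ≤ -1 → wL a = oa n →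
        wL (σ a - a) ≤ oa (-(s+2)) := by
      intro a ha0 n hn1 hn
      obtain ⟨c, u, k, hteq, hu1, hcv, hk⟩ := hdecomp a ha0 n hn
      obtain ⟨hσu, hσuU⟩ := hσunit u hu1
      have hb1 : wL (σ u * ((σ π)^k - π^k)) ≤ oa (-(s+1) - k) := by
        rw [map_mul, hσu, one_mul]
        refine le_trans (hbinle k (-(s+2)) hsup (by omega)) (oa_le_oa.mpr (by omega))
      have hb2 : wL ((σ u - u) * π^k) ≤ oa (-(s+1) - k) := by
        rw [map_mul, hpowval]
        calc wL (σ u - u) * oa (-(k:ℤ)) ≤ oa (-(s+1)) * oa (-(k:ℤ)) :=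
              mul_le_mul_left hσuU _
          _ = oa (-(s+1) - k) := by rw [← oa_mul]; exact congrArg oa (by ring)
      rw [hteq, hconj, map_mul, hcv]
      calc oa (n+k) * wL (σ u * ((σ π)^k - π^k) + (σ u - u) * π^k)
          ≤ oa (n+k) * oa (-(s+1) - k) := mul_le_mul_right (wL.map_add_le hb1 hb2) _
        _ = oa (n - s - 1) := by rw [← oa_mul]; exact congrArg oa (by ring)
        _ ≤ oa (-(s+2)) := oa_le_oa.mpr (by omega)
    have hall : ∀ a : L, wL a ≤ 1 → wL (σ a - a) ≤ oa (-(s+2)) := by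
      intro a ha
      rcases eq_or_ne a 0 with rfl | ha0
      · rw [map_zero, sub_zero, map_zero]; exact zero_le'
      obtain ⟨n, hn⟩ := exists_oa (hwL0 a ha0)
      have hn0 : n ≤ 0 := by
        have h1 := ha; rw [hn, ← oa_zero] at h1; exact oa_le_oa.mp h1
      rcases eq_or_lt_of_le hn0 with heq | hlt'
      · obtain ⟨c, hc⟩ := happrox a (by rw [hn, heq, oa_zero])
        have hAc : σ (A c) = A c := σ.commutes c
        have key : σ a - a = σ (a - A c) - (a - A c) := by
          rw [map_sub, hAc]; ring
        rcases eq_or_ne (a - A c) 0 with h0 | h0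
        · rw [key, h0, map_zero, sub_zero, map_zero]; exact zero_le'
        obtain ⟨n', hn'⟩ := exists_oa (hwL0 _ h0)
        have hn'1 : n' ≤ -1 := by
          have h1 := hc; rw [hn'] at h1; exact oa_le_oa.mp h1
        rw [key]; exact hneg _ h0 n' hn'1 hn'
      · exact hneg a ha0 n (by omega) hn
    have hcontra := hall a₀ ha₀i
    rw [ha₀] at hcontra
    have := oa_le_oa.mp hcontra
    omega
  -- ## exact valuation of σ y - y for v(y) prime to p
  have hexactval : ∀ (y : L) (n : ℤ), y ≠ 0 → wL y = oa n → ¬ (p:ℤ) ∣ n →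
      wL (σ y - y) = oa (n - s) := by
    intro y n hy0 hn hpn
    obtain ⟨c, u, k, hteq, hu1, hcv, hk⟩ := hdecomp y hy0 n hn
    have hkneg : ¬ (p:ℤ) ∣ ((k:ℕ):ℤ) := by
      intro hd
      apply hpn
      rw [hk] at hd
      have h1 : (p:ℤ) ∣ (-n) := by
        have h2 : (-n) = (p:ℤ) * ((-n)/p) + (-n) % p := (Int.mul_ediv_add_emod _ _).symm
        rw [h2]
        exact dvd_add (Dvd.intro _ rfl) hd
      exact dvd_neg.mp h1
    have hk1 : 1 ≤ k := by
      rcases Nat.eq_zero_or_pos k with h | h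
      · exfalso; apply hkneg; rw [h]; simp
      · exact h
    obtain ⟨hσu, hσuU⟩ := hσunit u hu1
    have hX := hbinexact hπs k hk1 hkneg
    have e1 : wL (σ u * ((σ π)^k - π^k)) = oa (-s - k) := by
      rw [map_mul, hσu, hX, one_mul]
    have e2 : wL ((σ u - u) * π^k) < oa (-s - k) := by
      rw [map_mul, hpowval]
      calc wL (σ u - u) * oa (-(k:ℤ)) ≤ oa (-(s+1)) * oa (-(k:ℤ)) := mul_le_mul_left hσuU _
        _ = oa (-(s+1) - k) := by rw [← oa_mul]; exact congrArg oa (by ring)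
        _ < oa (-s - k) := oa_lt_oa.mpr (by omega)
    have e3 : wL (σ u * ((σ π)^k - π^k) + (σ u - u) * π^k) = oa (-s - k) := by
      rw [Valuation.map_add_eq_of_lt_left _ (by rw [e1]; exact e2), e1]
    rw [hteq, hconj, map_mul, e3, hcv, ← oa_mul]
    exact congrArg oa (by ring)
  -- ## main loop
  rcases eq_or_ne x 0 with rfl | hx0
  · exact ⟨0, by rw [map_zero]; exact zero_le', by rw [map_zero, sub_zero]⟩
  obtain ⟨y₀, hy₀⟩ := h90 x hxtr
  have hy₀0 : y₀ ≠ 0 := by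
    intro h; apply hx0; rw [hy₀, h, map_zero, sub_zero]
  obtain ⟨n₀, hn₀⟩ := exists_oa (hwL0 y₀ hy₀0)
  have main : ∀ N : ℕ, ∀ y : L, y ≠ 0 → x = σ y - y → wL y ≤ oa (N:ℤ) →
      ∃ y' : L, wL y' ≤ 1 ∧ x = σ y' - y' := by
    intro N
    induction N with
    | zero =>
        intro y hy0 hxy hyle
        exact ⟨y, by simpa [oa_zero] using hyle, hxy⟩
    | succ N ih =>
        intro y hy0 hxy hyle
        obtain ⟨n, hn⟩ := exists_oa (hwL0 y hy0)
        rcases le_or_gt n 0 with hn0 | hn0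
        · exact ⟨y, by rw [hn, ← oa_zero]; exact oa_le_oa.mpr hn0, hxy⟩
        · have hpn : (p:ℤ) ∣ n := by
            by_contra hnd
            have h1 := hexactval y n hy0 hn hnd
            rw [← hxy] at h1
            have h2 : oa (n - s) ≤ oa (-s) := h1 ▸ hxs
            have h3 := oa_le_oa.mp h2
            omega
          obtain ⟨c, hc⟩ := hwK (oa (n / p))
          have hc0 : c ≠ 0 := fun h => by rw [h, map_zero] at hc; exact oa_ne_zero _ hc.symm
          have hAcne : A c ≠ 0 := fun h => hc0 ((map_eq_zero_iff A (RingHom.injective A)).mp h)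
          have hcv : wL (A c) = oa n := by
            rw [hext, hc, oa_pow, Int.mul_ediv_cancel' hpn]
          have hueq : y / A c * A c = y := div_mul_cancel₀ _ hAcne
          have huv : wL (y / A c) = 1 := by
            have h6 := congrArg wL hueq
            rw [map_mul, hcv, hn] at h6
            exact mul_right_cancel₀ (oa_ne_zero n) (by rw [h6, one_mul])
          obtain ⟨d, hd⟩ := happrox _ huv
          set y' := y - A (c * d) with hy'def
          have hy'eq : y' = A c * (y / A c - A d) := by
            rw [hy'def, mul_sub, mul_div_cancel₀ _ hAcne, ← map_mul]
          have hy'v : wL y' ≤ oa (N:ℤ) := by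
            rw [hy'eq, map_mul, hcv]
            calc oa n * wL (y / A c - A d) ≤ oa n * oa (-1) := mul_le_mul_right hd _
              _ = oa (n - 1) := by rw [← oa_mul]; exact congrArg oa (by ring)
              _ ≤ oa (N:ℤ) := oa_le_oa.mpr (by
                  have h8 := oa_le_oa.mp (hn ▸ hyle)
                  push_cast at h8 ⊢
                  omega)
          have hxy' : x = σ y' - y' := by
            have hAcd : σ (A (c*d)) = A (c*d) := σ.commutes _
            rw [hy'def, map_sub, hAcd, hxy]; ring
          rcases eq_or_ne y' 0 with h0 | h0
          · refine ⟨0, by rw [map_zero]; exact zero_le', ?_⟩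
            rw [map_zero, sub_zero, hxy', h0, map_zero, sub_zero]
          · exact ih y' h0 hxy' hy'v
  apply main (n₀.toNat) y₀ hy₀0 hy₀
  rw [hn₀]
  exact oa_le_oa.mpr (Int.self_le_toNat n₀)
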